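/- The neural code C = {{2,3,4,5}, {1,2,3}, {1,3,4}, {1,4,5}, {1,3}, {1,4}, {2,3}, {3,4}, {4,5}, {1}, {3}, {4}, ∅} on 5 neurons (obtained by adding the codeword {1} to the code {{2,3,4,5}, {1,2,3}, {1,3,4}, {1,4,5}, {1,3}, {1,4}, {2,3}, {3,4}, {4,5}, {3}, {4}, ∅}) is convex: there exist convex open sets U₁, …, U₅ ⊆ ℝ³ that realize C. -/

import Mathlib

/-- The atom of a codeword `σ` with respect to the sets `U i`:
`(⋂ i ∈ σ, U i) \ ⋃ j ∉ σ, U j`. -/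
def codeAtom {n : ℕ} {X : Type*} (U : Fin n → Set X) (σ : Finset (Fin n)) : Set X :=
  (⋂ i ∈ σ, U i) \ ⋃ (j : Fin n) (_ : j ∉ σ), U j

/-- A collection `U` of subsets of `X` realizes the code `C` if `⋃ i, U i ⊊ X` and,
for every nonempty `σ ⊆ [n]`, `σ ∈ C` iff the atom of `σ` is nonempty. -/
def Realizes {n : ℕ} {X : Type*} (U : Fin n → Set X) (C : Set (Finset (Fin n))) : Prop :=
  (⋃ i, U i) ⊂ Set.univ ∧
  ∀ σ : Finset (Fin n), σ.Nonempty → (σ ∈ C ↔ (codeAtom U σ).Nonempty)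

/-- The code obtained by adding the codeword `1` to the counterexample code
`{2345, 123, 134, 145, 13, 14, 23, 34, 45, 3, 4, ∅}`
(with neurons `1,…,5` encoded as `0,…,4` in `Fin 5`). -/
def augmentedCode' : Set (Finset (Fin 5)) :=
  {{1, 2, 3, 4}, {0, 1, 2}, {0, 2, 3}, {0, 3, 4}, {0, 2}, {0, 3},
   {1, 2}, {2, 3}, {3, 4}, {0}, {2}, {3}, ∅}

open Set

notation "E3" => EuclideanSpace ℝ (Fin 3)

/-- A point of `ℝ³`. -/
noncomputable def pt3 (a b c : ℝ) : E3 :=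
  (WithLp.equiv 2 _).symm ![a, b, c]

@[simp] lemma pt3_apply_zero (a b c : ℝ) : pt3 a b c 0 = a := rfl
@[simp] lemma pt3_apply_one (a b c : ℝ) : pt3 a b c 1 = b := rfl
@[simp] lemma pt3_apply_two (a b c : ℝ) : pt3 a b c 2 = c := rfl

/-- The realizing sets. -/
noncomputable def myU : Fin 5 → Set E3 :=
  ![{p | 1 - p 1 < p 2 ∧ p 2 < 8 ∧ -4 < p 0 ∧ p 0 < 4 ∧ p 1 < 5/2},
    {p | p 1 < p 0 ∧ p 2 < 1},
    {p | p 1 < p 0},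
    {p | p 1 < -p 0},
    {p | p 1 < -p 0 ∧ p 2 < 1}]

lemma combo_lt {u v d a b : ℝ} (hu : u < d) (hv : v < d) (ha : 0 ≤ a) (hb : 0 ≤ b)
    (hab : a + b = 1) : a * u + b * v < d := by
  rcases eq_or_lt_of_le ha with h | h
  · have hb1 : b = 1 := by linarith
    rw [← h, hb1]; linarith
  · have h1 : a * u < a * d := mul_lt_mul_of_pos_left hu h
    have h2 : b * v ≤ b * d := mul_le_mul_of_nonneg_left hv.le hb
    have h3 : a * d + b * d = d := by rw [← add_mul, hab, one_mul]
    linarith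

lemma conv0 : Convex ℝ {p : E3 | 1 - p 1 < p 2 ∧ p 2 < 8 ∧ -4 < p 0 ∧ p 0 < 4 ∧ p 1 < 5/2} := by
  intro x hx y hy a b ha hb hab
  simp only [Set.mem_setOf_eq] at hx hy ⊢
  simp only [PiLp.add_apply, PiLp.smul_apply, smul_eq_mul]
  obtain ⟨hx1, hx2, hx3, hx4, hx5⟩ := hx
  obtain ⟨hy1, hy2, hy3, hy4, hy5⟩ := hy
  refine ⟨?_, ?_, ?_, ?_, ?_⟩
  · have := combo_lt (show -(x 1) - x 2 < -1 by linarith)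
      (show -(y 1) - y 2 < -1 by linarith) ha hb hab
    nlinarith
  · exact combo_lt hx2 hy2 ha hb hab
  · have := combo_lt (show -(x 0) < 4 by linarith) (show -(y 0) < 4 by linarith) ha hb hab
    nlinarith
  · exact combo_lt hx4 hy4 ha hb hab
  · exact combo_lt hx5 hy5 ha hb hab

lemma conv2 : Convex ℝ {p : E3 | p 1 < p 0} := by
  intro x hx y hy a b ha hb hab
  simp only [Set.mem_setOf_eq] at hx hy ⊢
  simp only [PiLp.add_apply, PiLp.smul_apply, smul_eq_mul]
  have := combo_lt (show x 1 - x 0 < 0 by linarith) (show y 1 - y 0 < 0 by linarith) ha hb hab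
  nlinarith

lemma conv3 : Convex ℝ {p : E3 | p 1 < -p 0} := by
  intro x hx y hy a b ha hb hab
  simp only [Set.mem_setOf_eq] at hx hy ⊢
  simp only [PiLp.add_apply, PiLp.smul_apply, smul_eq_mul]
  have := combo_lt (show x 1 + x 0 < 0 by linarith) (show y 1 + y 0 < 0 by linarith) ha hb hab
  nlinarith

lemma conv1 : Convex ℝ {p : E3 | p 1 < p 0 ∧ p 2 < 1} := by
  intro x hx y hy a b ha hb hab
  simp only [Set.mem_setOf_eq] at hx hy ⊢
  simp only [PiLp.add_apply, PiLp.smul_apply, smul_eq_mul]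
  refine ⟨?_, combo_lt hx.2 hy.2 ha hb hab⟩
  have := combo_lt (show x 1 - x 0 < 0 by linarith [hx.1])
    (show y 1 - y 0 < 0 by linarith [hy.1]) ha hb hab
  nlinarith

lemma conv4 : Convex ℝ {p : E3 | p 1 < -p 0 ∧ p 2 < 1} := by
  intro x hx y hy a b ha hb hab
  simp only [Set.mem_setOf_eq] at hx hy ⊢
  simp only [PiLp.add_apply, PiLp.smul_apply, smul_eq_mul]
  refine ⟨?_, combo_lt hx.2 hy.2 ha hb hab⟩
  have := combo_lt (show x 1 + x 0 < 0 by linarith [hx.1])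
    (show y 1 + y 0 < 0 by linarith [hy.1]) ha hb hab
  nlinarith

lemma opn_coord (i : Fin 3) : Continuous fun p : E3 => p i := PiLp.continuous_apply 2 _ i

lemma opn_lt {f g : E3 → ℝ} (hf : Continuous f) (hg : Continuous g) :
    IsOpen {p : E3 | f p < g p} := isOpen_lt hf hg

lemma open0 : IsOpen {p : E3 | 1 - p 1 < p 2 ∧ p 2 < 8 ∧ -4 < p 0 ∧ p 0 < 4 ∧ p 1 < 5/2} := by
  have e : {p : E3 | 1 - p 1 < p 2 ∧ p 2 < 8 ∧ -4 < p 0 ∧ p 0 < 4 ∧ p 1 < 5/2}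
      = {p : E3 | 1 - p 1 < p 2} ∩ ({p : E3 | p 2 < 8} ∩ ({p : E3 | -4 < p 0}
        ∩ ({p : E3 | p 0 < 4} ∩ {p : E3 | p 1 < 5/2}))) := rfl
  rw [e]
  exact (opn_lt (continuous_const.sub (opn_coord 1)) (opn_coord 2)).inter
    ((opn_lt (opn_coord 2) continuous_const).inter
    ((opn_lt continuous_const (opn_coord 0)).inter
    ((opn_lt (opn_coord 0) continuous_const).inter
    (opn_lt (opn_coord 1) continuous_const))))

lemma open2 : IsOpen {p : E3 | p 1 < p 0} := opn_lt (opn_coord 1) (opn_coord 0)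

lemma open3 : IsOpen {p : E3 | p 1 < -p 0} := opn_lt (opn_coord 1) (opn_coord 0).neg

lemma open1 : IsOpen {p : E3 | p 1 < p 0 ∧ p 2 < 1} := by
  have e : {p : E3 | p 1 < p 0 ∧ p 2 < 1}
      = {p : E3 | p 1 < p 0} ∩ {p : E3 | p 2 < 1} := rfl
  rw [e]
  exact open2.inter (opn_lt (opn_coord 2) continuous_const)

lemma open4 : IsOpen {p : E3 | p 1 < -p 0 ∧ p 2 < 1} := by
  have e : {p : E3 | p 1 < -p 0 ∧ p 2 < 1}
      = {p : E3 | p 1 < -p 0} ∩ {p : E3 | p 2 < 1} := rfl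
  rw [e]
  exact open3.inter (opn_lt (opn_coord 2) continuous_const)

set_option maxHeartbeats 4000000 in
/-- **Proposition 3.4.** The code obtained by adding the codeword `1` to the
counterexample code is convex: it has a realization by convex open sets in `ℝ³`. -/
theorem augmentedCode'_convex :
    ∃ U : Fin 5 → Set (EuclideanSpace ℝ (Fin 3)),
      (∀ i, Convex ℝ (U i)) ∧ (∀ i, IsOpen (U i)) ∧ Realizes U augmentedCode' := by
  refine ⟨myU, ?_, ?_, ?_, ?_⟩
  · -- convexity
    intro i
    fin_cases i
    · exact conv0
    · exact conv1
    · exact conv2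
    · exact conv3
    · exact conv4
  · -- openness
    intro i
    fin_cases i
    · exact open0
    · exact open1
    · exact open2
    · exact open3
    · exact open4
  · -- union is a proper subset
    rw [Set.ssubset_univ_iff]
    intro h
    have hx : pt3 0 100 0 ∈ ⋃ i, myU i := by rw [h]; exact Set.mem_univ _
    obtain ⟨i, hi⟩ := Set.mem_iUnion.mp hx
    fin_cases i <;> simp [myU] at hi <;> norm_num at hi
  · -- atoms
    intro σ hσne
    constructor
    · -- σ ∈ C → atom nonempty
      intro hσC
      simp only [augmentedCode', Set.mem_insert_iff, Set.mem_singleton_iff] at hσC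
      have key : ∀ (x y z : ℝ) (τ : Finset (Fin 5)),
          (∀ i ∈ τ, pt3 x y z ∈ myU i) → (∀ j, j ∉ τ → pt3 x y z ∉ myU j) →
          (codeAtom myU τ).Nonempty := by
        intro x y z τ h1 h2
        refine ⟨pt3 x y z, ?_, ?_⟩
        · exact Set.mem_iInter₂.mpr h1
        · simp only [Set.mem_iUnion, not_exists]
          exact h2
      rcases hσC with h|h|h|h|h|h|h|h|h|h|h|h|h <;> subst h
      · -- {1,2,3,4} : (0,-5,0)
        refine key 0 (-5) 0 _ ?_ ?_ <;> intro j hj <;> fin_cases j <;>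
          first
            | exact absurd hj (by decide)
            | exact absurd (by decide) hj
            | (simp [myU]; norm_num)
            | (simp [myU])
      · -- {0,1,2} : (3,2,0)
        refine key 3 2 0 _ ?_ ?_ <;> intro j hj <;> fin_cases j <;>
          first
            | exact absurd hj (by decide)
            | exact absurd (by decide) hj
            | (simp [myU]; norm_num)
            | (simp [myU])
      · -- {0,2,3} : (0,-5,7)
        refine key 0 (-5) 7 _ ?_ ?_ <;> intro j hj <;> fin_cases j <;>
          first
            | exact absurd hj (by decide)
            | exact absurd (by decide) hj
            | (simp [myU]; norm_num)
            | (simp [myU])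
      · -- {0,3,4} : (-3,2,0)
        refine key (-3) 2 0 _ ?_ ?_ <;> intro j hj <;> fin_cases j <;>
          first
            | exact absurd hj (by decide)
            | exact absurd (by decide) hj
            | (simp [myU]; norm_num)
            | (simp [myU])
      · -- {0,2} : (3,2,2)
        refine key 3 2 2 _ ?_ ?_ <;> intro j hj <;> fin_cases j <;>
          first
            | exact absurd hj (by decide)
            | exact absurd (by decide) hj
            | (simp [myU]; norm_num)
            | (simp [myU])
      · -- {0,3} : (-3,2,2)
        refine key (-3) 2 2 _ ?_ ?_ <;> intro j hj <;> fin_cases j <;>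
          first
            | exact absurd hj (by decide)
            | exact absurd (by decide) hj
            | (simp [myU]; norm_num)
            | (simp [myU])
      · -- {1,2} : (3,2,-5)
        refine key 3 2 (-5) _ ?_ ?_ <;> intro j hj <;> fin_cases j <;>
          first
            | exact absurd hj (by decide)
            | exact absurd (by decide) hj
            | (simp [myU]; norm_num)
            | (simp [myU])
      · -- {2,3} : (0,-5,10)
        refine key 0 (-5) 10 _ ?_ ?_ <;> intro j hj <;> fin_cases j <;>
          first
            | exact absurd hj (by decide)
            | exact absurd (by decide) hj
            | (simp [myU]; norm_num)
            | (simp [myU])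
      · -- {3,4} : (-3,2,-5)
        refine key (-3) 2 (-5) _ ?_ ?_ <;> intro j hj <;> fin_cases j <;>
          first
            | exact absurd hj (by decide)
            | exact absurd (by decide) hj
            | (simp [myU]; norm_num)
            | (simp [myU])
      · -- {0} : (0,2,0)
        refine key 0 2 0 _ ?_ ?_ <;> intro j hj <;> fin_cases j <;>
          first
            | exact absurd hj (by decide)
            | exact absurd (by decide) hj
            | (simp [myU]; norm_num)
            | (simp [myU])
      · -- {2} : (3,2,10)
        refine key 3 2 10 _ ?_ ?_ <;> intro j hj <;> fin_cases j <;>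
          first
            | exact absurd hj (by decide)
            | exact absurd (by decide) hj
            | (simp [myU]; norm_num)
            | (simp [myU])
      · -- {3} : (-3,2,10)
        refine key (-3) 2 10 _ ?_ ?_ <;> intro j hj <;> fin_cases j <;>
          first
            | exact absurd hj (by decide)
            | exact absurd (by decide) hj
            | (simp [myU]; norm_num)
            | (simp [myU])
      · -- ∅ : contradiction
        exact absurd hσne (by simp)
    · -- atom nonempty → σ ∈ C
      rintro ⟨p, hp⟩
      simp only [codeAtom, Set.mem_diff, Set.mem_iInter, Set.mem_iUnion, not_exists] at hp
      obtain ⟨hin, hout⟩ := hp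
      have L12 : (1 : Fin 5) ∈ σ → (2 : Fin 5) ∈ σ := by
        intro h1; by_contra h2
        have a := hin 1 h1; have b := hout 2 h2
        simp only [myU, Matrix.cons_val_one, Matrix.head_cons, Set.mem_setOf_eq] at a
        simp only [myU, Set.mem_setOf_eq, not_lt] at b
        have b' : p 0 ≤ p 1 := by
          revert b
          simp [myU, not_lt]
        linarith [a.1]
      have L43 : (4 : Fin 5) ∈ σ → (3 : Fin 5) ∈ σ := by
        intro h4; by_contra h3
        have a := hin 4 h4; have b := hout 3 h3
        simp [myU] at a
        have b' : -p 0 ≤ p 1 := by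
          revert b
          simp [myU, not_lt]
        linarith [a.1]
      have L134 : (1 : Fin 5) ∈ σ → (3 : Fin 5) ∈ σ → (4 : Fin 5) ∈ σ := by
        intro h1 h3; by_contra h4
        have a := hin 1 h1; have c := hin 3 h3; have d := hout 4 h4
        simp [myU] at a c
        have d' : p 1 < -p 0 → 1 ≤ p 2 := by
          revert d
          simp [myU, not_and, not_lt]
        linarith [a.2, d' c]
      have L241 : (2 : Fin 5) ∈ σ → (4 : Fin 5) ∈ σ → (1 : Fin 5) ∈ σ := by
        intro h2 h4; by_contra h1
        have b := hin 2 h2; have d := hin 4 h4; have a := hout 1 h1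
        simp [myU] at b d
        have a' : p 1 < p 0 → 1 ≤ p 2 := by
          revert a
          simp [myU, not_and, not_lt]
        linarith [d.2, a' b]
      have L013 : ¬((0 : Fin 5) ∈ σ ∧ (1 : Fin 5) ∈ σ ∧ (3 : Fin 5) ∈ σ) := by
        rintro ⟨h0, h1, h3⟩
        have a := hin 0 h0; have b := hin 1 h1; have c := hin 3 h3
        simp [myU] at a b c
        linarith [a.1, b.1, b.2, c]
      have hs : σ ∈ (Finset.univ : Finset (Fin 5)).powerset :=
        Finset.mem_powerset.mpr (Finset.subset_univ σ)
      fin_cases hs <;>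
        first
          | exact absurd rfl hσne.ne_empty
          | (simp only [augmentedCode', Set.mem_insert_iff, Set.mem_singleton_iff]; decide)
          | (refine absurd (L12 ?_) ?_ <;> decide)
          | (refine absurd (L43 ?_) ?_ <;> decide)
          | (refine absurd (L134 ?_ ?_) ?_ <;> decide)
          | (refine absurd (L241 ?_ ?_) ?_ <;> decide)
          | (refine absurd ⟨?_, ?_, ?_⟩ L013 <;> decide)
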